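/- arXiv:1007.0109 — 2 statements merged into one kernel-verified Lean document; each statement's English description precedes it below -/
import Mathlib

section
/- Let w : (0,∞) → [0,∞) be a continuous function such that lim_{s→0+} s·w(s) = c₀ and w is the Laplace transform of a Radon measure t on [0,∞), i.e., w(s) = ∫_{[0,∞)} e^{-sx} t(dx). Then the distribution function U(y) = t([0,y]) satisfies lim_{y→∞} U(y)/y = c₀. Conversely, if U(y)/y → c₀ then s·w(s) → c₀ as s → 0+. -/
open MeasureTheory Real Set Filter Polynomial
open scoped ENNReal


lemma aux_exp_setint {s : ℝ} (x : ℝ) (hs : 0 < s) :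
    ∫ y in Ioi x, s * exp (-(s*y)) = exp (-(s*x)) := by
  have h1 : ∫ y in Ioi x, exp (-(s*y)) = s⁻¹ * exp (-(s*x)) := by
    have := integral_comp_mul_left_Ioi (fun u => exp (-u)) x hs
    simp only [integral_exp_neg_Ioi] at this
    rw [this]; simp [abs_of_pos (inv_pos.mpr hs)]
  rw [MeasureTheory.integral_const_mul, h1]
  field_simp

lemma aux_exp_integrableOn {s : ℝ} (x : ℝ) (hs : 0 < s) :
    IntegrableOn (fun y => s * exp (-(s*y))) (Ioi x) := by
  have := (exp_neg_integrableOn_Ioi x hs).const_mul s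
  simpa [neg_mul, IntegrableOn] using this

lemma aux_exp_lint {s : ℝ} (x : ℝ) (hs : 0 < s) :
    ∫⁻ y in Ici x, ENNReal.ofReal (s * exp (-(s*y))) = ENNReal.ofReal (exp (-(s*x))) := by
  rw [← MeasureTheory.restrict_Ioi_eq_restrict_Ici]
  rw [← ofReal_integral_eq_lintegral_ofReal (aux_exp_integrableOn x hs)]
  · rw [aux_exp_setint x hs]
  · filter_upwards with y using by positivity

lemma aux_swap (t : Measure ℝ) [IsLocallyFiniteMeasure t] {s : ℝ} (hs : 0 < s) :
    ∫⁻ x in Ici 0, ENNReal.ofReal (exp (-(s*x))) ∂t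
      = ∫⁻ y, ENNReal.ofReal (s * exp (-(s*y))) * t (Icc 0 y) ∂volume := by
  set F : ℝ → ℝ → ℝ≥0∞ := fun x y =>
    ENNReal.ofReal (s * exp (-(s*y))) * ({p : ℝ×ℝ | p.1 ≤ p.2}.indicator 1 (x,y)) with hF
  have hFmeas : AEMeasurable (Function.uncurry F) ((t.restrict (Ici 0)).prod volume) := by
    apply Measurable.aemeasurable
    apply Measurable.mul
    · exact (ENNReal.measurable_ofReal.comp ((measurable_exp.comp
        ((measurable_const.mul measurable_snd).neg)).const_mul s))
    · exact measurable_const.indicator (measurableSet_le measurable_fst measurable_snd)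
  have h1 : ∀ x : ℝ, ENNReal.ofReal (exp (-(s*x))) = ∫⁻ y, F x y ∂volume := by
    intro x
    rw [← aux_exp_lint x hs, ← lintegral_indicator measurableSet_Ici]
    congr 1; ext y
    by_cases h : x ≤ y <;>
      simp [hF, Set.indicator_apply, h, Set.mem_Ici]
  calc ∫⁻ x in Ici 0, ENNReal.ofReal (exp (-(s*x))) ∂t
      = ∫⁻ x in Ici 0, ∫⁻ y, F x y ∂volume ∂t := by
        exact lintegral_congr h1
    _ = ∫⁻ y, ∫⁻ x in Ici 0, F x y ∂t ∂volume := lintegral_lintegral_swap hFmeas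
    _ = ∫⁻ y, ENNReal.ofReal (s * exp (-(s*y))) * t (Icc 0 y) ∂volume := by
        apply lintegral_congr
        intro y
        have : ∀ x : ℝ, F x y
            = (Iic y).indicator (fun _ => ENNReal.ofReal (s * exp (-(s*y)))) x := by
          intro x
          by_cases h : x ≤ y <;> simp [hF, Set.indicator_apply, h]
        rw [lintegral_congr this, lintegral_indicator_const measurableSet_Iic,
          Measure.restrict_apply measurableSet_Iic]
        congr 1
        rw [Set.inter_comm, Set.Ici_inter_Iic]


lemma aux_g2_int : IntegrableOn (fun y => y * exp (-y)) (Ioi (0:ℝ)) := by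
  have h := Real.GammaIntegral_convergent (by norm_num : (0:ℝ) < 2)
  apply h.congr_fun ?_ measurableSet_Ioi
  intro x hx
  norm_num [Real.rpow_one, mul_comm]

lemma aux_g2 : ∫ y in Ioi (0:ℝ), y * exp (-y) = 1 := by
  have h := Real.Gamma_eq_integral (by norm_num : (0:ℝ) < 2)
  have h2 : Real.Gamma 2 = 1 := by
    have := Real.Gamma_nat_eq_factorial 1
    norm_num at this; convert this using 2; norm_num
  rw [h2] at h
  rw [show ∫ y in Ioi (0:ℝ), y * exp (-y) = ∫ x in Ioi (0:ℝ), exp (-x) * x ^ ((2:ℝ)-1) from ?_, ← h]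
  apply setIntegral_congr_fun measurableSet_Ioi
  intro x hx
  norm_num [Real.rpow_one, mul_comm]

lemma aux_gamma_integrableOn {s : ℝ} (hs : 0 < s) :
    IntegrableOn (fun y => y * exp (-(s*y))) (Ioi (0:ℝ)) := by
  have h := (integrableOn_Ioi_comp_mul_left_iff (fun u => u * exp (-u)) 0 hs)
  rw [mul_zero] at h
  have h2 : IntegrableOn (fun x => s⁻¹ * (s * x * exp (-(s * x)))) (Ioi (0:ℝ)) :=
    (h.mpr aux_g2_int).const_mul s⁻¹
  apply h2.congr_fun ?_ measurableSet_Ioi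
  intro x hx
  show s⁻¹ * (s * x * exp (-(s * x))) = x * exp (-(s * x))
  rw [show s⁻¹ * (s * x * exp (-(s * x))) = (s⁻¹ * s) * (x * exp (-(s * x))) by ring,
    inv_mul_cancel₀ hs.ne', one_mul]

lemma aux_gamma {s : ℝ} (hs : 0 < s) :
    ∫ y in Ioi (0:ℝ), s^2 * (y * exp (-(s*y))) = 1 := by
  have h := integral_comp_mul_left_Ioi (fun u => u * exp (-u)) 0 hs
  rw [mul_zero, aux_g2, smul_eq_mul, mul_one] at h
  rw [MeasureTheory.integral_const_mul]
  rw [show ∫ y in Ioi (0:ℝ), y * exp (-(s*y)) = s⁻¹ * ∫ y in Ioi (0:ℝ), (s*y) * exp (-(s*y)) from ?_]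
  · rw [show ∫ y in Ioi (0:ℝ), s * y * exp (-(s*y)) = ∫ y in Ioi (0:ℝ), (fun u => u * exp (-u)) (s * y) from by norm_num, h]
    field_simp
  · rw [← MeasureTheory.integral_const_mul]
    apply setIntegral_congr_fun measurableSet_Ioi
    intro x hx; show x * exp (-(s * x)) = s⁻¹ * (s * x * exp (-(s * x)))
    rw [eq_comm, show s⁻¹ * (s * x * exp (-(s*x))) = (s⁻¹*s) * (x * exp (-(s*x))) by ring, inv_mul_cancel₀ hs.ne', one_mul]

lemma aux_measU (t : Measure ℝ) : Measurable (fun y => t (Icc 0 y)) := by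
  have : Monotone (fun y => t (Icc 0 y)) := fun a b hab => measure_mono (Icc_subset_Icc_right hab)
  exact this.measurable

lemma aux_abelian (t : Measure ℝ) [IsLocallyFiniteMeasure t]
    {c : ℝ} (hc : 0 ≤ c)
    (hfin : ∀ s : ℝ, 0 < s → (∫⁻ x in Ici (0:ℝ), ENNReal.ofReal (exp (-(s * x))) ∂t) ≠ ⊤)
    (hU : Tendsto (fun y => (t (Icc 0 y)).toReal / y) atTop (nhds c)) :
    Tendsto (fun s => s * (∫⁻ x in Ici (0:ℝ), ENNReal.ofReal (exp (-(s * x))) ∂t).toReal)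
      (nhdsWithin 0 (Ioi 0)) (nhds c) := by
  set U : ℝ → ℝ := fun y => (t (Icc 0 y)).toReal with hUdef
  set L : ℝ → ℝ≥0∞ := fun s => ∫⁻ x in Ici (0:ℝ), ENNReal.ofReal (exp (-(s * x))) ∂t with hLdef
  have hUfin : ∀ y : ℝ, t (Icc 0 y) ≠ ⊤ := fun y => (isCompact_Icc.measure_lt_top).ne
  have hUnn : ∀ y, 0 ≤ U y := fun y => ENNReal.toReal_nonneg
  have hUmono : Monotone U := by
    intro a b hab
    exact ENNReal.toReal_mono (hUfin b) (measure_mono (Icc_subset_Icc_right hab))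
  -- representation
  have hrep : ∀ s : ℝ, 0 < s →
      s * (L s).toReal = ∫ y in Ioi (0:ℝ), s^2 * (exp (-(s*y)) * U y) := by
    intro s hs
    have h1 : L s = ∫⁻ y, ENNReal.ofReal (s * exp (-(s*y))) * t (Icc 0 y) ∂volume :=
      aux_swap t hs
    have hmeas : AEMeasurable (fun y => ENNReal.ofReal (s * exp (-(s*y))) * t (Icc 0 y))
        volume := by
      apply Measurable.aemeasurable
      exact (Measurable.ennreal_ofReal (by fun_prop)).mul (aux_measU t)
    have hfin' : ∀ᵐ y : ℝ ∂volume,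
        ENNReal.ofReal (s * exp (-(s*y))) * t (Icc 0 y) < ⊤ := by
      filter_upwards with y
      exact ENNReal.mul_lt_top ENNReal.ofReal_lt_top (hUfin y).lt_top
    have h2 : (L s).toReal
        = ∫ y, (ENNReal.ofReal (s * exp (-(s*y))) * t (Icc 0 y)).toReal ∂volume := by
      rw [h1, integral_toReal hmeas hfin']
    have h3 : ∀ y : ℝ, (ENNReal.ofReal (s * exp (-(s*y))) * t (Icc 0 y)).toReal
        = s * exp (-(s*y)) * U y := by
      intro y
      rw [ENNReal.toReal_mul, ENNReal.toReal_ofReal (by positivity)]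
    have h4 : s * (L s).toReal = ∫ y, s^2 * (exp (-(s*y)) * U y) ∂volume := by
      rw [h2]
      rw [show (fun y => (ENNReal.ofReal (s * exp (-(s*y))) * t (Icc 0 y)).toReal)
          = fun y => s * exp (-(s*y)) * U y from funext h3]
      rw [← MeasureTheory.integral_const_mul]
      congr 1; ext y; ring
    rw [h4]
    -- restrict to Ioi 0
    rw [← integral_indicator measurableSet_Ioi]
    apply integral_congr_ae
    have hne : ({(0:ℝ)} : Set ℝ)ᶜ ∈ ae volume := by
      rw [compl_mem_ae_iff]; exact volume_singleton
    filter_upwards [hne] with y hy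
    rcases lt_trichotomy y 0 with h|h|h
    · have : Icc (0:ℝ) y = ∅ := Icc_eq_empty (by linarith)
      simp [Set.indicator_apply, not_lt.mpr (le_of_lt h), hUdef, this, h.not_gt]
    · exact absurd h (by simpa using hy)
    · simp [Set.indicator_apply, h]
  -- integrability
  have hint : ∀ s : ℝ, 0 < s →
      IntegrableOn (fun y => s^2 * (exp (-(s*y)) * U y)) (Ioi (0:ℝ)) := by
    intro s hs
    have h1 : (∫⁻ y in Ioi (0:ℝ), ENNReal.ofReal (s * exp (-(s*y))) * t (Icc 0 y) ∂volume) ≠ ⊤ := by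
      refine ne_top_of_le_ne_top ?_ (setLIntegral_le_lintegral _ _)
      rw [← aux_swap t hs]
      exact hfin s hs
    have h2 := integrable_toReal_of_lintegral_ne_top
      (((Measurable.ennreal_ofReal (by fun_prop : Measurable fun y =>
        s * exp (-(s*y)))).mul (aux_measU t)).aemeasurable) h1
    have h3 := h2.const_mul s
    apply h3.congr
    filter_upwards with y
    rw [Pi.mul_apply, ENNReal.toReal_mul, ENNReal.toReal_ofReal (by positivity)]
    ring
  have hgint : ∀ s : ℝ, 0 < s →
      IntegrableOn (fun y => s^2 * (y * exp (-(s*y)))) (Ioi (0:ℝ)) :=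
    fun s hs => (aux_gamma_integrableOn hs).const_mul _
  -- the limit
  rw [Metric.tendsto_nhds]
  intro ε hε
  -- choose M
  have hU2 : ∀ᶠ y in atTop, |U y / y - c| < ε/2 := by
    have := Metric.tendsto_nhds.mp hU (ε/2) (by linarith)
    simpa [Real.dist_eq] using this
  obtain ⟨M₀, hM₀⟩ := eventually_atTop.mp hU2
  set M : ℝ := max M₀ 1 with hMdef
  have hM1 : (1:ℝ) ≤ M := le_max_right _ _
  have hM0 : (0:ℝ) < M := lt_of_lt_of_le one_pos hM1
  have hMb : ∀ y : ℝ, M ≤ y → |U y - c * y| ≤ ε/2 * y := by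
    intro y hy
    have hy0 : 0 < y := lt_of_lt_of_le hM0 hy
    have := hM₀ y (le_trans (le_max_left _ _) hy)
    have h2 : |U y / y - c| * y ≤ ε/2 * y := by
      apply mul_le_mul_of_nonneg_right (le_of_lt this) (le_of_lt hy0)
    calc |U y - c * y| = |U y / y - c| * y := by
          rw [show U y - c * y = (U y / y - c) * y by field_simp; try ring, abs_mul, abs_of_pos hy0]
      _ ≤ ε/2 * y := h2
  set K : ℝ := M * (U M + c * M) with hKdef
  have hclaim : ∀ s : ℝ, 0 < s → |s * (L s).toReal - c| ≤ s^2 * K + ε/2 := by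
    intro s hs
    have hrs := hrep s hs
    have hfs := hint s hs
    have hgs := hgint s hs
    have hone : ∫ y in Ioi (0:ℝ), s^2 * (y * exp (-(s*y))) = 1 := aux_gamma hs
    have hsub : s * (L s).toReal - c
        = ∫ y in Ioi (0:ℝ), (s^2 * (exp (-(s*y)) * U y) - c * (s^2 * (y * exp (-(s*y))))) := by
      rw [integral_sub hfs (hgs.const_mul c),
        MeasureTheory.integral_const_mul c (fun a => s^2 * (a * exp (-(s*a)))), hone, hrs, mul_one]
    have hd : IntegrableOn
        (fun y => s^2 * (exp (-(s*y)) * U y) - c * (s^2 * (y * exp (-(s*y))))) (Ioi (0:ℝ)) :=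
      hfs.sub (hgs.const_mul c)
    set d : ℝ → ℝ := fun y => s^2 * (exp (-(s*y)) * U y) - c * (s^2 * (y * exp (-(s*y)))) with hddef
    have hdabs : IntegrableOn (fun y => |d y|) (Ioi (0:ℝ)) := hd.abs
    have habs : |s * (L s).toReal - c| ≤ ∫ y in Ioi (0:ℝ), |d y| := by
      rw [hsub]
      have h0 := norm_integral_le_integral_norm (μ := volume.restrict (Ioi (0:ℝ))) d
      simpa [Real.norm_eq_abs] using h0
    have hsplit : ∫ y in Ioi (0:ℝ), |d y|
        = (∫ y in Ioc (0:ℝ) M, |d y|) + ∫ y in Ioi M, |d y| := by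
      rw [← setIntegral_union (Ioc_disjoint_Ioi le_rfl) measurableSet_Ioi
        (hdabs.mono_set Ioc_subset_Ioi_self) (hdabs.mono_set (Ioi_subset_Ioi hM0.le)),
        Ioc_union_Ioi_eq_Ioi hM0.le]
    have hb1 : (∫ y in Ioc (0:ℝ) M, |d y|) ≤ s^2 * K := by
      have hptw : ∀ y ∈ Ioc (0:ℝ) M, |d y| ≤ s^2 * (U M + c * M) := by
        intro y hy
        obtain ⟨hy0, hyM⟩ := hy
        have he1 : exp (-(s*y)) ≤ 1 := exp_le_one_iff.mpr (by nlinarith)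
        have he0 : 0 < exp (-(s*y)) := exp_pos _
        have h1 : |d y| = s^2 * exp (-(s*y)) * |U y - c * y| := by
          simp only [hddef]
          rw [show s^2 * (exp (-(s*y)) * U y) - c * (s^2 * (y * exp (-(s*y))))
            = s^2 * exp (-(s*y)) * (U y - c * y) by ring, abs_mul, abs_of_pos (by positivity)]
        rw [h1]
        have h2 : |U y - c * y| ≤ U M + c * M := by
          have hcy : c * y ≤ c * M := mul_le_mul_of_nonneg_left hyM hc
          have hcy0 : 0 ≤ c * y := mul_nonneg hc hy0.le
          have := hUmono hyM
          have := hUnn y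
          rw [abs_le]; constructor <;> [linarith; linarith]
        have h3 : exp (-(s*y)) * |U y - c * y| ≤ 1 * (U M + c * M) :=
          mul_le_mul he1 h2 (abs_nonneg _) one_pos.le
        calc s^2 * exp (-(s*y)) * |U y - c * y|
            = s^2 * (exp (-(s*y)) * |U y - c * y|) := by ring
          _ ≤ s^2 * (1 * (U M + c * M)) := mul_le_mul_of_nonneg_left h3 (sq_nonneg s)
          _ = s^2 * (U M + c * M) := by ring
      calc (∫ y in Ioc (0:ℝ) M, |d y|) ≤ ∫ y in Ioc (0:ℝ) M, s^2 * (U M + c * M) := by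
            apply setIntegral_mono_on (hdabs.mono_set Ioc_subset_Ioi_self)
              (integrableOn_const measure_Ioc_lt_top.ne) measurableSet_Ioc hptw
        _ = s^2 * (U M + c * M) * M := by
            rw [setIntegral_const]
            simp [Real.volume_Ioc, hM0.le]
            ring
        _ = s^2 * K := by rw [hKdef]; ring
    have hb2 : (∫ y in Ioi M, |d y|) ≤ ε/2 := by
      have hptw : ∀ y ∈ Ioi M, |d y| ≤ ε/2 * (s^2 * (y * exp (-(s*y)))) := by
        intro y hy
        have hy' : M ≤ y := le_of_lt hy
        have hy0 : 0 < y := lt_of_lt_of_le hM0 hy'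
        have h1 : |d y| = s^2 * exp (-(s*y)) * |U y - c * y| := by
          simp only [hddef]
          rw [show s^2 * (exp (-(s*y)) * U y) - c * (s^2 * (y * exp (-(s*y))))
            = s^2 * exp (-(s*y)) * (U y - c * y) by ring, abs_mul, abs_of_pos (by positivity)]
        rw [h1]
        have h2 := hMb y hy'
        have he0 : 0 < exp (-(s*y)) := exp_pos _
        calc s^2 * exp (-(s*y)) * |U y - c * y|
            ≤ s^2 * exp (-(s*y)) * (ε/2 * y) := by
              apply mul_le_mul_of_nonneg_left h2 (by positivity)
          _ = ε/2 * (s^2 * (y * exp (-(s*y)))) := by ring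
      calc (∫ y in Ioi M, |d y|) ≤ ∫ y in Ioi M, ε/2 * (s^2 * (y * exp (-(s*y)))) := by
            apply setIntegral_mono_on (hdabs.mono_set (Ioi_subset_Ioi hM0.le))
              (IntegrableOn.mono_set (hgs.const_mul (ε/2)) (Ioi_subset_Ioi hM0.le))
              measurableSet_Ioi hptw
        _ = ε/2 * ∫ y in Ioi M, s^2 * (y * exp (-(s*y))) := MeasureTheory.integral_const_mul _ _
        _ ≤ ε/2 * ∫ y in Ioi (0:ℝ), s^2 * (y * exp (-(s*y))) := by
            apply mul_le_mul_of_nonneg_left ?_ (by linarith)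
            apply setIntegral_mono_set hgs ?_ (HasSubset.Subset.eventuallyLE (Ioi_subset_Ioi hM0.le))
            refine (ae_restrict_iff' measurableSet_Ioi).mpr (ae_of_all _ fun y hy => ?_)
            have hy0 : (0:ℝ) < y := hy
            positivity
        _ = ε/2 := by rw [hone, mul_one]
    calc |s * (L s).toReal - c| ≤ ∫ y in Ioi (0:ℝ), |d y| := habs
      _ = _ := hsplit
      _ ≤ s^2 * K + ε/2 := add_le_add hb1 hb2
  -- finish
  have hK0 : 0 ≤ K := by
    have h1 := hUnn M
    have h2 : 0 ≤ c * M := mul_nonneg hc hM0.le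
    rw [hKdef]
    exact mul_nonneg hM0.le (by linarith)
  have hsmall : ∀ᶠ s in nhdsWithin 0 (Ioi 0), s^2 * K < ε/2 := by
    have hcont : Tendsto (fun s : ℝ => s^2 * K) (nhdsWithin 0 (Ioi 0)) (nhds 0) := by
      have : Tendsto (fun s : ℝ => s^2 * K) (nhds 0) (nhds (0^2 * K)) := by
        apply Tendsto.mul_const
        exact (continuous_pow 2).tendsto 0
      simpa using this.mono_left nhdsWithin_le_nhds
    exact hcont.eventually_lt_const (by linarith)
  filter_upwards [hsmall, self_mem_nhdsWithin] with s h1 h2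
  rw [Real.dist_eq]
  calc |s * (L s).toReal - c| ≤ s^2 * K + ε/2 := hclaim s h2
    _ < ε/2 + ε/2 := by linarith
    _ = ε := by ring


lemma aux_restrict (t : Measure ℝ) (ht : t (Iio 0) = 0) : t.restrict (Ici 0) = t := by
  apply Measure.restrict_eq_self_of_ae_mem
  rw [ae_iff]
  simpa [not_le, Iio] using ht

lemma aux_ae_nonneg (t : Measure ℝ) (ht : t (Iio 0) = 0) : ∀ᵐ x ∂t, 0 ≤ x := by
  rw [ae_iff]; simpa [not_le, Iio] using ht

lemma aux_integrable_exp (t : Measure ℝ) (ht : t (Iio 0) = 0) {s : ℝ} (hs : 0 < s)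
    (hfin : (∫⁻ x in Ici (0:ℝ), ENNReal.ofReal (exp (-(s * x))) ∂t) ≠ ⊤) :
    Integrable (fun x => exp (-(s * x))) t := by
  refine ⟨Continuous.aestronglyMeasurable (by fun_prop), ?_⟩
  rw [hasFiniteIntegral_iff_ofReal (ae_of_all _ fun x => (exp_pos _).le)]
  conv_lhs => rw [← aux_restrict t ht]
  exact lt_top_iff_ne_top.mpr hfin

lemma aux_W_eq (t : Measure ℝ) (ht : t (Iio 0) = 0) {s : ℝ} (hs : 0 < s) :
    ∫ x, exp (-(s * x)) ∂t = (∫⁻ x in Ici (0:ℝ), ENNReal.ofReal (exp (-(s * x))) ∂t).toReal := by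
  conv_lhs => rw [← aux_restrict t ht]
  rw [integral_eq_lintegral_of_nonneg_ae (ae_of_all _ fun x => (exp_pos _).le)
    (Continuous.aestronglyMeasurable (by fun_prop))]

-- scaled limits
lemma aux_scale (t : Measure ℝ) (ht : t (Iio 0) = 0) {c : ℝ}
    (hA : Tendsto (fun s => s * ∫ x, exp (-(s * x)) ∂t) (nhdsWithin 0 (Ioi 0)) (nhds c))
    (k : ℕ) :
    Tendsto (fun s => s * ∫ x, exp (-((((k:ℝ)+1) * s) * x)) ∂t)
      (nhdsWithin 0 (Ioi 0)) (nhds (c / ((k:ℝ)+1))) := by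
  have hk : (0:ℝ) < (k:ℝ)+1 := by positivity
  have h1 : Tendsto (fun s : ℝ => ((k:ℝ)+1) * s) (nhdsWithin 0 (Ioi 0)) (nhds 0) := by
    have h0 : Continuous (fun s : ℝ => ((k:ℝ)+1) * s) := continuous_const.mul continuous_id
    have := h0.tendsto (0:ℝ)
    simp only [mul_zero] at this
    exact this.mono_left nhdsWithin_le_nhds
  have h2 : Tendsto (fun s : ℝ => ((k:ℝ)+1) * s) (nhdsWithin 0 (Ioi 0)) (nhdsWithin 0 (Ioi 0)) := by
    rw [tendsto_nhdsWithin_iff]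
    refine ⟨h1, ?_⟩
    filter_upwards [self_mem_nhdsWithin] with s hs
    exact mul_pos hk hs
  have h3 := hA.comp h2
  have h4 := h3.const_mul (((k:ℝ)+1)⁻¹)
  have h5 : (((k:ℝ)+1)⁻¹) * c = c / ((k:ℝ)+1) := by field_simp
  rw [h5] at h4
  apply h4.congr'
  filter_upwards [self_mem_nhdsWithin] with s hs
  show ((k:ℝ)+1)⁻¹ * ((((k:ℝ)+1) * s) * ∫ x, exp (-((((k:ℝ)+1) * s) * x)) ∂t) = _
  rw [show ((k:ℝ)+1)⁻¹ * ((((k:ℝ)+1) * s) * ∫ x, exp (-((((k:ℝ)+1) * s) * x)) ∂t)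
    = (((k:ℝ)+1)⁻¹ * (((k:ℝ)+1))) * (s * ∫ x, exp (-((((k:ℝ)+1) * s) * x)) ∂t) by ring,
    inv_mul_cancel₀ hk.ne', one_mul]

-- pointwise monomial identity
lemma aux_monomial (s x : ℝ) (i : ℕ) :
    exp (-(s * x)) * exp (-(s * x)) ^ i = exp (-((((i:ℝ)+1) * s) * x)) := by
  rw [← Real.exp_nat_mul, ← Real.exp_add]
  congr 1
  push_cast
  ring

lemma aux_poly_integral (r : Polynomial ℝ) :
    ∫ u in (0:ℝ)..1, r.eval u
      = ∑ i ∈ Finset.range (r.natDegree + 1), r.coeff i * (1 / ((i:ℝ)+1)) := by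
  have h1 : ∀ u : ℝ, r.eval u = ∑ i ∈ Finset.range (r.natDegree + 1), r.coeff i * u ^ i :=
    fun u => r.eval_eq_sum_range u
  rw [intervalIntegral.integral_congr (g := fun u => ∑ i ∈ Finset.range (r.natDegree + 1),
    r.coeff i * u ^ i) (fun u _ => h1 u)]
  rw [intervalIntegral.integral_finset_sum (fun i _ =>
    (Continuous.intervalIntegrable (by fun_prop : Continuous fun u : ℝ => r.coeff i * u ^ i) 0 1))]
  refine Finset.sum_congr rfl fun i _ => ?_
  rw [intervalIntegral.integral_const_mul, integral_pow]
  norm_num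

lemma aux_phi_lim (t : Measure ℝ) [IsLocallyFiniteMeasure t] (ht : t (Iio 0) = 0) {c : ℝ}
    (hfin : ∀ s : ℝ, 0 < s → (∫⁻ x in Ici (0:ℝ), ENNReal.ofReal (exp (-(s * x))) ∂t) ≠ ⊤)
    (hA : Tendsto (fun s => s * ∫ x, exp (-(s * x)) ∂t) (nhdsWithin 0 (Ioi 0)) (nhds c))
    (r : Polynomial ℝ) :
    Tendsto (fun s => s * ∫ x, exp (-(s * x)) * r.eval (exp (-(s * x))) ∂t)
      (nhdsWithin 0 (Ioi 0)) (nhds (c * ∫ u in (0:ℝ)..1, r.eval u)) := by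
  set n := r.natDegree + 1 with hn
  have hIntk : ∀ (i : ℕ) (s : ℝ), 0 < s → Integrable (fun x => exp (-((((i:ℝ)+1) * s) * x))) t :=
    fun i s hs => aux_integrable_exp t ht (by positivity) (hfin _ (by positivity))
  have hΦ : ∀ s : ℝ, 0 < s → ∫ x, exp (-(s * x)) * r.eval (exp (-(s * x))) ∂t
      = ∑ i ∈ Finset.range n, r.coeff i * ∫ x, exp (-((((i:ℝ)+1) * s) * x)) ∂t := by
    intro s hs
    have h1 : (fun x => exp (-(s * x)) * r.eval (exp (-(s * x))))
        = fun x => ∑ i ∈ Finset.range n, r.coeff i * exp (-((((i:ℝ)+1) * s) * x)) := by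
      funext x
      rw [r.eval_eq_sum_range, Finset.mul_sum]
      refine Finset.sum_congr rfl fun i _ => ?_
      rw [← aux_monomial s x i]; ring
    rw [h1, integral_finset_sum _ (fun i _ => (hIntk i s hs).const_mul _)]
    exact Finset.sum_congr rfl fun i _ => MeasureTheory.integral_const_mul _ _
  have hsum : Tendsto (fun s => ∑ i ∈ Finset.range n,
      r.coeff i * (s * ∫ x, exp (-((((i:ℝ)+1) * s) * x)) ∂t))
      (nhdsWithin 0 (Ioi 0))
      (nhds (∑ i ∈ Finset.range n, r.coeff i * (c / ((i:ℝ)+1)))) := by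
    apply tendsto_finset_sum
    intro i _
    exact (aux_scale t ht hA i).const_mul _
  have heq : (∑ i ∈ Finset.range n, r.coeff i * (c / ((i:ℝ)+1)))
      = c * ∫ u in (0:ℝ)..1, r.eval u := by
    rw [aux_poly_integral, hn, Finset.mul_sum]
    refine Finset.sum_congr rfl fun i _ => ?_
    field_simp
  rw [← heq]
  apply hsum.congr'
  filter_upwards [self_mem_nhdsWithin] with s hs
  rw [hΦ s hs, Finset.mul_sum]
  refine Finset.sum_congr rfl fun i _ => by ring


noncomputable def psiP (δ u : ℝ) : ℝ :=
  min 1 (max 0 ((u - exp (-1) * (1-δ)) / (exp (-1) * δ))) * (max u (exp (-1)))⁻¹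

noncomputable def psiM (δ u : ℝ) : ℝ :=
  min 1 (max 0 ((u - exp (-1)) / (exp (-1) * δ))) * (max u (exp (-1)))⁻¹

lemma aux_b_pos : (0:ℝ) < exp (-1) := exp_pos _
lemma aux_b_half : exp (-1:ℝ) ≤ 1/2 := by
  rw [exp_neg]
  rw [inv_le_comm₀ (exp_pos 1) (by norm_num)]
  have := Real.exp_one_gt_d9
  norm_num
  linarith

lemma aux_maxb_pos (u : ℝ) : (0:ℝ) < max u (exp (-1)) :=
  lt_of_lt_of_le aux_b_pos (le_max_right _ _)

lemma psiP_cont (δ : ℝ) : Continuous (psiP δ) := by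
  apply Continuous.mul
  · exact continuous_const.min (continuous_const.max ((continuous_id.sub continuous_const).div_const _))
  · exact (continuous_id.max continuous_const).inv₀ (fun u => (aux_maxb_pos u).ne')

lemma psiM_cont (δ : ℝ) : Continuous (psiM δ) := by
  apply Continuous.mul
  · exact continuous_const.min (continuous_const.max ((continuous_id.sub continuous_const).div_const _))
  · exact (continuous_id.max continuous_const).inv₀ (fun u => (aux_maxb_pos u).ne')

lemma clamp_nonneg (v : ℝ) : 0 ≤ min 1 (max 0 v) := le_min one_pos.le (le_max_left _ _)
lemma clamp_le_one (v : ℝ) : min 1 (max 0 v) ≤ 1 := min_le_left _ _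

lemma psiP_nonneg (δ u : ℝ) : 0 ≤ psiP δ u :=
  mul_nonneg (clamp_nonneg _) (inv_nonneg.mpr (aux_maxb_pos u).le)

lemma psiM_nonneg (δ u : ℝ) : 0 ≤ psiM δ u :=
  mul_nonneg (clamp_nonneg _) (inv_nonneg.mpr (aux_maxb_pos u).le)

lemma psiP_eq_inv {δ u : ℝ} (hδ : 0 < δ) (hu : exp (-1) ≤ u) : psiP δ u = u⁻¹ := by
  have hb := aux_b_pos
  have h1 : (1:ℝ) ≤ (u - exp (-1) * (1-δ)) / (exp (-1) * δ) := by
    rw [le_div_iff₀ (by positivity)]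
    nlinarith
  rw [psiP, max_eq_right (le_trans zero_le_one h1), min_eq_left h1, one_mul,
    max_eq_left hu]

lemma psiM_le_one_div {δ u : ℝ} (hu : 0 < u) : u * psiM δ u ≤ 1 := by
  have h1 : psiM δ u ≤ (max u (exp (-1)))⁻¹ := by
    rw [psiM]
    nth_rewrite 2 [← one_mul (max u (exp (-1)))⁻¹]
    exact mul_le_mul_of_nonneg_right (clamp_le_one _) (inv_nonneg.mpr (aux_maxb_pos u).le)
  have h2 : (max u (exp (-1)))⁻¹ ≤ u⁻¹ := by
    apply inv_anti₀ hu (le_max_left _ _)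
  calc u * psiM δ u ≤ u * u⁻¹ := mul_le_mul_of_nonneg_left (h1.trans h2) hu.le
    _ = 1 := mul_inv_cancel₀ hu.ne'

lemma psiM_eq_zero {δ u : ℝ} (hδ : 0 < δ) (hu : u ≤ exp (-1)) : psiM δ u = 0 := by
  have hb := aux_b_pos
  have h1 : (u - exp (-1)) / (exp (-1) * δ) ≤ 0 :=
    div_nonpos_of_nonpos_of_nonneg (by linarith) (by positivity)
  rw [psiM, max_eq_left h1, min_eq_right (by norm_num), zero_mul]

lemma psiM_eq_inv {δ u : ℝ} (hδ : 0 < δ) (hu : exp (-1) * (1+δ) ≤ u) : psiM δ u = u⁻¹ := by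
  have hb := aux_b_pos
  have hbu : exp (-1) ≤ u := le_trans (by nlinarith) hu
  have h1 : (1:ℝ) ≤ (u - exp (-1)) / (exp (-1) * δ) := by
    rw [le_div_iff₀ (by positivity)]
    nlinarith
  rw [psiM, max_eq_right (le_trans zero_le_one h1), min_eq_left h1, one_mul,
    max_eq_left hbu]

lemma psiP_eq_zero {δ u : ℝ} (hδ : 0 < δ) (hu : u ≤ exp (-1) * (1-δ)) : psiP δ u = 0 := by
  have hb := aux_b_pos
  have h1 : (u - exp (-1) * (1-δ)) / (exp (-1) * δ) ≤ 0 :=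
    div_nonpos_of_nonpos_of_nonneg (by linarith) (by positivity)
  rw [psiP, max_eq_left h1, min_eq_right (by norm_num), zero_mul]

lemma aux_intP {δ : ℝ} (hδ : 0 < δ) (hδ2 : δ ≤ 1/2) :
    ∫ u in (0:ℝ)..1, psiP δ u ≤ 1 + δ := by
  have hb := aux_b_pos
  have hb2 := aux_b_half
  set b : ℝ := exp (-1) with hbdef
  set a : ℝ := b * (1-δ) with hadef
  have ha0 : 0 ≤ a := by rw [hadef]; nlinarith
  have hab : a ≤ b := by rw [hadef]; nlinarith
  have hb1 : b ≤ 1 := by linarith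
  have hint : ∀ p q : ℝ, IntervalIntegrable (psiP δ) volume p q :=
    fun p q => (psiP_cont δ).intervalIntegrable p q
  have hsplit : ∫ u in (0:ℝ)..1, psiP δ u
      = (∫ u in (0:ℝ)..a, psiP δ u) + ((∫ u in a..b, psiP δ u) + ∫ u in b..(1:ℝ), psiP δ u) := by
    rw [intervalIntegral.integral_add_adjacent_intervals (hint a b) (hint b 1),
      intervalIntegral.integral_add_adjacent_intervals (hint 0 a) (hint a 1)]
  have hp1 : (∫ u in (0:ℝ)..a, psiP δ u) = 0 := by
    rw [intervalIntegral.integral_congr (g := fun _ => (0:ℝ)) ?_, intervalIntegral.integral_zero]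
    intro u hu
    rw [uIcc_of_le ha0] at hu
    exact psiP_eq_zero hδ hu.2
  have hp2 : (∫ u in a..b, psiP δ u) ≤ δ := by
    have h1 : (∫ u in a..b, psiP δ u) ≤ ∫ u in a..b, b⁻¹ := by
      apply intervalIntegral.integral_mono_on hab (hint a b)
        (intervalIntegrable_const)
      intro u hu
      calc psiP δ u ≤ 1 * (max u b)⁻¹ :=
            mul_le_mul_of_nonneg_right (clamp_le_one _) (inv_nonneg.mpr (aux_maxb_pos u).le)
        _ ≤ b⁻¹ := by
            rw [one_mul]
            exact inv_anti₀ hb (le_max_right _ _)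
    rw [intervalIntegral.integral_const, smul_eq_mul] at h1
    calc (∫ u in a..b, psiP δ u) ≤ (b - a) * b⁻¹ := h1
      _ = δ := by rw [hadef]; field_simp; ring
  have hp3 : (∫ u in b..(1:ℝ), psiP δ u) ≤ 1 := by
    have h1 : (∫ u in b..(1:ℝ), psiP δ u) ≤ ∫ u in b..(1:ℝ), u⁻¹ := by
      apply intervalIntegral.integral_mono_on hb1 (hint b 1)
        (intervalIntegral.intervalIntegrable_inv (fun u hu => by
          rw [uIcc_of_le hb1] at hu; exact (lt_of_lt_of_le hb hu.1).ne') continuousOn_id)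
      intro u hu
      rw [psiP_eq_inv hδ hu.1]; rfl
    have h2 : (∫ u in b..(1:ℝ), u⁻¹) = 1 := by
      rw [integral_inv_of_pos hb one_pos, hbdef, one_div, Real.exp_neg, inv_inv, Real.log_exp]
    exact h1.trans h2.le
  rw [hsplit, hp1]
  linarith

lemma aux_intM {δ : ℝ} (hδ : 0 < δ) (hδ2 : δ ≤ 1/2) :
    1 - δ ≤ ∫ u in (0:ℝ)..1, psiM δ u := by
  have hb := aux_b_pos
  have hb2 := aux_b_half
  set b : ℝ := exp (-1) with hbdef
  set b' : ℝ := b * (1+δ) with hb'def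
  have hb'0 : 0 < b' := by rw [hb'def]; positivity
  have hb'1 : b' ≤ 1 := by rw [hb'def]; nlinarith
  have hint : ∀ p q : ℝ, IntervalIntegrable (psiM δ) volume p q :=
    fun p q => (psiM_cont δ).intervalIntegrable p q
  have hsplit : ∫ u in (0:ℝ)..1, psiM δ u
      = (∫ u in (0:ℝ)..b', psiM δ u) + ∫ u in b'..(1:ℝ), psiM δ u := by
    rw [intervalIntegral.integral_add_adjacent_intervals (hint 0 b') (hint b' 1)]
  have hm1 : 0 ≤ ∫ u in (0:ℝ)..b', psiM δ u :=
    intervalIntegral.integral_nonneg hb'0.le (fun u _ => psiM_nonneg δ u)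
  have hm2 : (∫ u in b'..(1:ℝ), psiM δ u) = log (1/b') := by
    rw [intervalIntegral.integral_congr (g := fun u => u⁻¹) ?_]
    · exact integral_inv_of_pos hb'0 one_pos
    · intro u hu
      rw [uIcc_of_le hb'1] at hu
      exact psiM_eq_inv hδ hu.1
  have hm3 : 1 - δ ≤ log (1/b') := by
    rw [hb'def, one_div, mul_inv, hbdef, Real.exp_neg, inv_inv,
      Real.log_mul (exp_pos 1).ne' (by positivity), Real.log_exp]
    have h4 : log ((1+δ)⁻¹) = - log (1+δ) := Real.log_inv _
    have h5 : log (1+δ) ≤ δ := by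
      have := Real.log_le_sub_one_of_pos (show (0:ℝ) < 1+δ by linarith)
      linarith
    linarith
  rw [hsplit]
  linarith


lemma aux_phi_integrable (t : Measure ℝ) (ht : t (Iio 0) = 0)
    (hfin : ∀ s : ℝ, 0 < s → (∫⁻ x in Ici (0:ℝ), ENNReal.ofReal (exp (-(s * x))) ∂t) ≠ ⊤)
    (r : Polynomial ℝ) {s : ℝ} (hs : 0 < s) :
    Integrable (fun x => exp (-(s * x)) * r.eval (exp (-(s * x)))) t := by
  have h1 : (fun x => exp (-(s * x)) * r.eval (exp (-(s * x))))
      = fun x => ∑ i ∈ Finset.range (r.natDegree + 1),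
          r.coeff i * exp (-((((i:ℝ)+1) * s) * x)) := by
    funext x
    rw [r.eval_eq_sum_range, Finset.mul_sum]
    refine Finset.sum_congr rfl fun i _ => ?_
    rw [← aux_monomial s x i]; ring
  rw [h1]
  exact integrable_finset_sum _ (fun i _ =>
    (aux_integrable_exp t ht (by positivity) (hfin _ (by positivity))).const_mul _)

lemma aux_tauberian (t : Measure ℝ) [IsLocallyFiniteMeasure t] (ht : t (Iio 0) = 0)
    {c : ℝ} (hc : 0 ≤ c)
    (hfin : ∀ s : ℝ, 0 < s → (∫⁻ x in Ici (0:ℝ), ENNReal.ofReal (exp (-(s * x))) ∂t) ≠ ⊤)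
    (hA : Tendsto (fun s => s * ∫ x, exp (-(s * x)) ∂t) (nhdsWithin 0 (Ioi 0)) (nhds c)) :
    Tendsto (fun y => (t (Icc 0 y)).toReal / y) atTop (nhds c) := by
  have hG : Tendsto (fun s => s * (t (Icc 0 (1/s))).toReal) (nhdsWithin 0 (Ioi 0)) (nhds c) := by
    rw [Metric.tendsto_nhds]
    intro ε hε
    have hc1 : (0:ℝ) < c + 1 := by linarith
    set δ : ℝ := min (1/2) (ε/(6*(c+1))) with hδdef
    have hδ0 : 0 < δ := lt_min (by norm_num) (by positivity)
    have hδ2 : δ ≤ 1/2 := min_le_left _ _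
    have hδε : 3*(c+1)*δ ≤ ε/2 := by
      have h1 : δ ≤ ε/(6*(c+1)) := min_le_right _ _
      have h2 : 3*(c+1)*δ ≤ 3*(c+1)*(ε/(6*(c+1))) := by nlinarith
      have h3 : 3*(c+1)*(ε/(6*(c+1))) = ε/2 := by field_simp; ring
      linarith
    obtain ⟨qp, hqp⟩ := exists_polynomial_near_of_continuousOn 0 1 (psiP δ)
      ((psiP_cont δ).continuousOn) δ hδ0
    obtain ⟨qm, hqm⟩ := exists_polynomial_near_of_continuousOn 0 1 (psiM δ)
      ((psiM_cont δ).continuousOn) δ hδ0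
    set rp : Polynomial ℝ := qp + C δ with hrpdef
    set rm : Polynomial ℝ := qm - C δ with hrmdef
    have hrp_eval : ∀ u : ℝ, rp.eval u = qp.eval u + δ := by
      intro u; rw [hrpdef, eval_add, eval_C]
    have hrm_eval : ∀ u : ℝ, rm.eval u = qm.eval u - δ := by
      intro u; rw [hrmdef, eval_sub, eval_C]
    have hrp_ge : ∀ u ∈ Icc (0:ℝ) 1, psiP δ u ≤ rp.eval u := by
      intro u hu
      have := abs_lt.mp (hqp u hu)
      rw [hrp_eval]; linarith [this.1]
    have hrm_le : ∀ u ∈ Icc (0:ℝ) 1, rm.eval u ≤ psiM δ u := by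
      intro u hu
      have := abs_lt.mp (hqm u hu)
      rw [hrm_eval]; linarith [this.2]
    -- integral bounds
    have hIp : (∫ u in (0:ℝ)..1, rp.eval u) ≤ 1 + 3*δ := by
      have h1 : (∫ u in (0:ℝ)..1, rp.eval u) ≤ ∫ u in (0:ℝ)..1, psiP δ u + 2*δ := by
        apply intervalIntegral.integral_mono_on zero_le_one
          (rp.continuous.intervalIntegrable 0 1)
          (((psiP_cont δ).add continuous_const).intervalIntegrable 0 1)
        intro u hu
        have := abs_lt.mp (hqp u hu)
        rw [hrp_eval, Pi.add_apply]; linarith [this.2]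
      have h2 : (∫ u in (0:ℝ)..1, psiP δ u + 2*δ)
          = (∫ u in (0:ℝ)..1, psiP δ u) + 2*δ := by
        rw [intervalIntegral.integral_add ((psiP_cont δ).intervalIntegrable 0 1)
          (intervalIntegrable_const), intervalIntegral.integral_const]
        simp
      have h3 := aux_intP hδ0 hδ2
      rw [h2] at h1; linarith
    have hIm : 1 - 3*δ ≤ ∫ u in (0:ℝ)..1, rm.eval u := by
      have h1 : (∫ u in (0:ℝ)..1, psiM δ u - 2*δ) ≤ ∫ u in (0:ℝ)..1, rm.eval u := by
        apply intervalIntegral.integral_mono_on zero_le_one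
          (((psiM_cont δ).sub continuous_const).intervalIntegrable 0 1)
          (rm.continuous.intervalIntegrable 0 1)
        intro u hu
        have := abs_lt.mp (hqm u hu)
        rw [hrm_eval, Pi.sub_apply]; linarith [this.1]
      have h2 : (∫ u in (0:ℝ)..1, psiM δ u - 2*δ)
          = (∫ u in (0:ℝ)..1, psiM δ u) - 2*δ := by
        rw [intervalIntegral.integral_sub ((psiM_cont δ).intervalIntegrable 0 1)
          (intervalIntegrable_const), intervalIntegral.integral_const]
        simp
      have h3 := aux_intM hδ0 hδ2
      rw [h2] at h1; linarith
    have hcIp : c * ∫ u in (0:ℝ)..1, rp.eval u ≤ c + ε/2 := by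
      have h1 : c * ∫ u in (0:ℝ)..1, rp.eval u ≤ c * (1 + 3*δ) :=
        mul_le_mul_of_nonneg_left hIp hc
      nlinarith
    have hcIm : c - ε/2 ≤ c * ∫ u in (0:ℝ)..1, rm.eval u := by
      have h1 : c * (1 - 3*δ) ≤ c * ∫ u in (0:ℝ)..1, rm.eval u :=
        mul_le_mul_of_nonneg_left hIm hc
      nlinarith
    have hlimP := aux_phi_lim t ht hfin hA rp
    have hlimM := aux_phi_lim t ht hfin hA rm
    have hev1 : ∀ᶠ s in nhdsWithin 0 (Ioi 0),
        s * ∫ x, exp (-(s * x)) * rp.eval (exp (-(s * x))) ∂t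
          < (c * ∫ u in (0:ℝ)..1, rp.eval u) + ε/2 :=
      hlimP.eventually_lt_const (by linarith)
    have hev2 : ∀ᶠ s in nhdsWithin 0 (Ioi 0),
        (c * ∫ u in (0:ℝ)..1, rm.eval u) - ε/2
          < s * ∫ x, exp (-(s * x)) * rm.eval (exp (-(s * x))) ∂t :=
      hlimM.eventually_const_lt (by linarith)
    filter_upwards [hev1, hev2, self_mem_nhdsWithin] with s h1 h2 hs
    have hs0 : (0:ℝ) < s := hs
    -- sandwich
    have hIndInt : Integrable ((Icc (0:ℝ) (1/s)).indicator (fun _ => (1:ℝ))) t := by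
      rw [integrable_indicator_iff measurableSet_Icc]
      exact integrableOn_const isCompact_Icc.measure_lt_top.ne
    have hInd_eq : ∫ x, (Icc (0:ℝ) (1/s)).indicator (fun _ => (1:ℝ)) x ∂t
        = (t (Icc 0 (1/s))).toReal := by
      rw [integral_indicator_const (1:ℝ) measurableSet_Icc]; simp [Measure.real]
    have hu01 : ∀ x : ℝ, 0 ≤ x → exp (-(s * x)) ∈ Icc (0:ℝ) 1 := by
      intro x hx
      exact ⟨(exp_pos _).le, exp_le_one_iff.mpr (by nlinarith)⟩
    have hup : (t (Icc 0 (1/s))).toReal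
        ≤ ∫ x, exp (-(s * x)) * rp.eval (exp (-(s * x))) ∂t := by
      rw [← hInd_eq]
      apply integral_mono_ae hIndInt (aux_phi_integrable t ht hfin rp hs0)
      filter_upwards [aux_ae_nonneg t ht] with x hx
      by_cases hmem : x ∈ Icc (0:ℝ) (1/s)
      · rw [indicator_of_mem hmem]
        have hsx : s * x ≤ 1 := by
          have := hmem.2
          calc s * x ≤ s * (1/s) := mul_le_mul_of_nonneg_left this hs0.le
            _ = 1 := by field_simp
        have hub : exp (-1) ≤ exp (-(s * x)) := exp_le_exp.mpr (by linarith)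
        have h3 := psiP_eq_inv hδ0 hub
        calc (1:ℝ) = exp (-(s * x)) * (exp (-(s * x)))⁻¹ :=
              (mul_inv_cancel₀ (exp_pos _).ne').symm
          _ = exp (-(s * x)) * psiP δ (exp (-(s * x))) := by rw [h3]
          _ ≤ exp (-(s * x)) * rp.eval (exp (-(s * x))) :=
              mul_le_mul_of_nonneg_left (hrp_ge _ (hu01 x hx)) (exp_pos _).le
      · rw [indicator_of_notMem hmem]
        exact mul_nonneg (exp_pos _).le ((psiP_nonneg δ _).trans (hrp_ge _ (hu01 x hx)))
    have hlo : (∫ x, exp (-(s * x)) * rm.eval (exp (-(s * x))) ∂t)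
        ≤ (t (Icc 0 (1/s))).toReal := by
      rw [← hInd_eq]
      apply integral_mono_ae (aux_phi_integrable t ht hfin rm hs0) hIndInt
      filter_upwards [aux_ae_nonneg t ht] with x hx
      by_cases hmem : x ∈ Icc (0:ℝ) (1/s)
      · rw [indicator_of_mem hmem]
        calc exp (-(s * x)) * rm.eval (exp (-(s * x)))
            ≤ exp (-(s * x)) * psiM δ (exp (-(s * x))) :=
              mul_le_mul_of_nonneg_left (hrm_le _ (hu01 x hx)) (exp_pos _).le
          _ ≤ 1 := psiM_le_one_div (exp_pos _)
      · rw [indicator_of_notMem hmem]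
        have hxgt : 1/s < x := by
          by_contra hcon
          exact hmem ⟨hx, not_lt.mp hcon⟩
        have hsx : 1 ≤ s * x := by
          rw [div_lt_iff₀ hs0] at hxgt
          nlinarith
        have hub : exp (-(s * x)) ≤ exp (-1) := exp_le_exp.mpr (by linarith)
        calc exp (-(s * x)) * rm.eval (exp (-(s * x)))
            ≤ exp (-(s * x)) * psiM δ (exp (-(s * x))) :=
              mul_le_mul_of_nonneg_left (hrm_le _ (hu01 x hx)) (exp_pos _).le
          _ = 0 := by rw [psiM_eq_zero hδ0 hub, mul_zero]
    have e1 : s * (t (Icc 0 (1/s))).toReal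
        ≤ s * ∫ x, exp (-(s * x)) * rp.eval (exp (-(s * x))) ∂t :=
      mul_le_mul_of_nonneg_left hup hs0.le
    have e2 : s * (∫ x, exp (-(s * x)) * rm.eval (exp (-(s * x))) ∂t)
        ≤ s * (t (Icc 0 (1/s))).toReal :=
      mul_le_mul_of_nonneg_left hlo hs0.le
    rw [Real.dist_eq, abs_lt]
    constructor
    · linarith
    · linarith
  -- transfer to atTop
  have hinv : Tendsto (fun y : ℝ => y⁻¹) atTop (nhdsWithin 0 (Ioi 0)) :=
    tendsto_inv_atTop_nhdsGT_zero
  have := hG.comp hinv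
  apply this.congr'
  filter_upwards [eventually_gt_atTop (0:ℝ)] with y hy
  show y⁻¹ * (t (Icc 0 (1/y⁻¹))).toReal = (t (Icc 0 y)).toReal / y
  rw [one_div, inv_inv, div_eq_inv_mul]

/-- Tauberian theorem (index 1): for a Radon measure `t` on `[0,∞)` with finite Laplace
transform `w(s) = ∫ e^{-sx} t(dx)` for `s > 0`, `s·w(s) → c₀` as `s → 0+` iff
`U(y)/y = t([0,y])/y → c₀` as `y → ∞`. -/
theorem stmt15 (t : Measure ℝ) [IsLocallyFiniteMeasure t] (ht : t (Set.Iio 0) = 0)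
    (c : ℝ) (hc : 0 ≤ c)
    (w : ℝ → ℝ) (hwcont : ContinuousOn w (Set.Ioi 0)) (hwnn : ∀ s : ℝ, 0 < s → 0 ≤ w s)
    (hfin : ∀ s : ℝ, 0 < s →
      (∫⁻ x in Set.Ici (0 : ℝ), ENNReal.ofReal (Real.exp (-s * x)) ∂t) ≠ ⊤)
    (hw : ∀ s : ℝ, 0 < s →
      w s = (∫⁻ x in Set.Ici (0 : ℝ), ENNReal.ofReal (Real.exp (-s * x)) ∂t).toReal) :
    Filter.Tendsto (fun s => s * w s) (nhdsWithin 0 (Set.Ioi 0)) (nhds c)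
      ↔ Filter.Tendsto (fun y => (t (Set.Icc 0 y)).toReal / y) Filter.atTop (nhds c) := by
  have hfin' : ∀ s : ℝ, 0 < s →
      (∫⁻ x in Ici (0:ℝ), ENNReal.ofReal (exp (-(s * x))) ∂t) ≠ ⊤ := by
    intro s hs
    have := hfin s hs
    simpa [neg_mul] using this
  have hkey : ∀ s : ℝ, 0 < s → s * w s = s * ∫ x, exp (-(s * x)) ∂t := by
    intro s hs
    have h1 := hw s hs
    have h2 := aux_W_eq t ht hs
    simp only [neg_mul] at h1
    rw [h1, h2]
  constructor
  · intro hA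
    apply aux_tauberian t ht hc hfin'
    apply hA.congr'
    filter_upwards [self_mem_nhdsWithin] with s hs
    exact hkey s hs
  · intro hU
    have h := aux_abelian t hc hfin' hU
    apply h.congr'
    filter_upwards [self_mem_nhdsWithin] with s hs
    have h1 := hw s hs
    simp only [neg_mul] at h1
    rw [h1]
end

section
/- Let a > 1 and let Z^{(1)}, Z^{(2)}, … be random variables with Z^{(n)} ≥ 1 a.s., with Laplace transforms g^{(n)}(s) = E[e^{-s Z^{(n)}}] and h^{(n)}(s) = E[e^{-s Z^{(n)}} 1_{1 ≤ Z^{(n)} < a}], satisfying 1 - g^{(n+1)}(s) = (1 - g^{(1)}(s/a^n)) exp(Σ_{j=0}^{n-1} h^{(j+1)}(s/a^{n-j})) for all s ≥ 0. Then for every n ≥ 1: (1/a^n) exp(Σ_{j=0}^{n-1} h^{(j+1)}(0)) ≤ 2ea/(a-1). -/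
open MeasureTheory Real Set Finset

/-- Secant-line bound: `exp (-t) ≤ 1 - t/2` for `t ∈ [0,1]`. -/
lemma exp_neg_le_one_sub_half {t : ℝ} (ht0 : 0 ≤ t) (ht1 : t ≤ 1) :
    Real.exp (-t) ≤ 1 - t / 2 := by
  have h1 := convexOn_exp.2 (Set.mem_univ (0 : ℝ)) (Set.mem_univ (-1 : ℝ))
    (by linarith : (0:ℝ) ≤ 1 - t) ht0 (by ring)
  simp only [smul_eq_mul, mul_zero, zero_add, mul_neg_one, Real.exp_zero] at h1
  have he : Real.exp (-1) ≤ 1 / 2 := by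
    rw [Real.exp_neg]
    have h2 : (2:ℝ) ≤ Real.exp 1 := by
      have := Real.add_one_le_exp (1:ℝ); linarith
    rw [inv_le_comm₀ (Real.exp_pos 1) (by norm_num)]
    linarith
  have : t * Real.exp (-1) ≤ t * (1/2) := mul_le_mul_of_nonneg_left he ht0
  linarith

/-- Uniform bound: `(1/aⁿ) exp(Σ_{j=0}^{n-1} h^{(j+1)}(0)) ≤ 2ea/(a-1)` for the hierarchical
coalescence process with `Z^{(n)} ≥ 1` and the iterated recursion between the Laplace
transforms `g^{(n)}` and the truncated transforms `h^{(n)}`. -/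
theorem stmt18 {Ω : Type*} [MeasurableSpace Ω] (μ : Measure Ω) [IsProbabilityMeasure μ]
    (a : ℝ) (ha : 1 < a)
    (Z : ℕ → Ω → ℝ) (hZm : ∀ n, Measurable (Z n)) (hZ1 : ∀ n, 1 ≤ n → ∀ᵐ ω ∂μ, 1 ≤ Z n ω)
    (g h : ℕ → ℝ → ℝ)
    (hg : ∀ n s, g n s = ∫ ω, Real.exp (-s * Z n ω) ∂μ)
    (hh : ∀ n s, h n s = ∫ ω in {ω | 1 ≤ Z n ω ∧ Z n ω < a}, Real.exp (-s * Z n ω) ∂μ)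
    (hrec : ∀ n : ℕ, 1 ≤ n → ∀ s : ℝ, 0 ≤ s →
      1 - g (n + 1) s
        = (1 - g 1 (s / a ^ n)) *
            Real.exp (∑ j ∈ Finset.range n, h (j + 1) (s / a ^ (n - j)))) :
    ∀ n : ℕ, 1 ≤ n →
      (1 / a ^ n) * Real.exp (∑ j ∈ Finset.range n, h (j + 1) 0)
        ≤ 2 * Real.exp 1 * a / (a - 1) := by
  intro n hn
  have ha0 : (0:ℝ) < a := by linarith
  set s : ℝ := (a - 1) / a with hs_def
  have hs_pos : 0 < s := div_pos (by linarith) ha0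
  have hs_le1 : s ≤ 1 := by rw [hs_def, div_le_one ha0]; linarith
  have hApos : (0:ℝ) < a ^ n := pow_pos ha0 n
  have hAge1 : (1:ℝ) ≤ a ^ n := one_le_pow₀ ha.le
  -- g (n+1) s ≥ 0
  have hg_nonneg : 0 ≤ g (n+1) s := by
    rw [hg]; exact integral_nonneg fun ω => (Real.exp_pos _).le
  -- Step 2: 1 - g 1 (s/aⁿ) ≥ (s/aⁿ)/2
  have ht2_pos : 0 < s / a ^ n := div_pos hs_pos hApos
  have ht2_le1 : s / a ^ n ≤ 1 := by
    rw [div_le_one hApos]; exact hs_le1.trans hAge1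
  have hstep2 : (s / a ^ n) / 2 ≤ 1 - g 1 (s / a ^ n) := by
    set t := s / a ^ n with htdef
    have hmeas : Measurable fun ω => Real.exp (-t * Z 1 ω) :=
      ((hZm 1).const_mul (-t)).exp
    have hbd : ∀ᵐ ω ∂μ, ‖Real.exp (-t * Z 1 ω)‖ ≤ Real.exp (-t) := by
      filter_upwards [hZ1 1 le_rfl] with ω hω
      rw [Real.norm_eq_abs, abs_of_pos (Real.exp_pos _)]
      apply Real.exp_le_exp.2
      nlinarith [ht2_pos.le]
    have hint : Integrable (fun ω => Real.exp (-t * Z 1 ω)) μ :=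
      (integrable_const (Real.exp (-t))).mono' hmeas.aestronglyMeasurable hbd
    have hle : g 1 t ≤ Real.exp (-t) := by
      rw [hg]
      calc ∫ ω, Real.exp (-t * Z 1 ω) ∂μ ≤ ∫ _ω, Real.exp (-t) ∂μ := by
            apply integral_mono_ae hint (integrable_const _)
            filter_upwards [hZ1 1 le_rfl] with ω hω
            apply Real.exp_le_exp.2
            nlinarith [ht2_pos.le]
        _ = Real.exp (-t) := by simp
    have := exp_neg_le_one_sub_half ht2_pos.le ht2_le1
    linarith
  -- Step 3: each h (j+1) (s/a^(n-j)) ≥ h (j+1) 0 - (s/a^(n-j)) * a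
  have hstep3 : ∀ j, j < n →
      h (j+1) 0 - (s / a ^ (n - j)) * a ≤ h (j+1) (s / a ^ (n - j)) := by
    intro j hj
    set t := s / a ^ (n - j) with htd
    have htpos : 0 < t := div_pos hs_pos (pow_pos ha0 _)
    set S : Set Ω := {ω | 1 ≤ Z (j+1) ω ∧ Z (j+1) ω < a} with hSdef
    have hS : MeasurableSet S := by
      rw [hSdef, Set.setOf_and]
      exact (measurableSet_le measurable_const (hZm (j+1))).inter
        (measurableSet_lt (hZm (j+1)) measurable_const)
    have hμS_le1 : (μ S).toReal ≤ 1 := by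
      have h1 : μ S ≤ μ Set.univ := measure_mono (Set.subset_univ S)
      have := ENNReal.toReal_mono (measure_ne_top μ Set.univ) h1
      simpa using this
    have hμS_nonneg : 0 ≤ (μ S).toReal := ENNReal.toReal_nonneg
    have hh0 : h (j+1) 0 = (μ S).toReal := by
      rw [hh]
      simp only [neg_zero, zero_mul, Real.exp_zero]
      rw [setIntegral_const]
      simp
      rfl
    have hmeas : Measurable fun ω => Real.exp (-t * Z (j+1) ω) :=
      ((hZm (j+1)).const_mul (-t)).exp
    have hintOn : IntegrableOn (fun ω => Real.exp (-t * Z (j+1) ω)) S μ := by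
      apply (integrable_const (1:ℝ)).mono' hmeas.aestronglyMeasurable
      filter_upwards [ae_restrict_mem hS] with ω hω
      rw [Real.norm_eq_abs, abs_of_pos (Real.exp_pos _)]
      rw [show (1:ℝ) = Real.exp 0 by simp]
      apply Real.exp_le_exp.2
      nlinarith [hω.1, htpos.le]
    have hmono : ∫ _ω in S, (1 - t * a) ∂μ ≤ ∫ ω in S, Real.exp (-t * Z (j+1) ω) ∂μ := by
      apply setIntegral_mono_on ((integrable_const _).integrableOn) hintOn hS
      intro ω hω
      have h1 : -t * Z (j+1) ω + 1 ≤ Real.exp (-t * Z (j+1) ω) := Real.add_one_le_exp _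
      have h2 : t * Z (j+1) ω ≤ t * a := mul_le_mul_of_nonneg_left hω.2.le htpos.le
      linarith
    have hconst : ∫ _ω in S, (1 - t * a) ∂μ = (1 - t * a) * (μ S).toReal := by
      rw [setIntegral_const, smul_eq_mul, mul_comm]
      rfl
    have hta : 0 ≤ t * a := mul_nonneg htpos.le ha0.le
    rw [hh0, hh, ← hSdef]
    nlinarith [hmono, hconst]
  -- Geometric sum bound: ∑ (s/a^(n-j)) * a ≤ 1
  have hsum_le : ∑ j ∈ Finset.range n, (s / a ^ (n - j)) * a ≤ 1 := by
    have hrefl : ∑ j ∈ Finset.range n, (s / a ^ (n - j)) * a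
        = ∑ j ∈ Finset.range n, (s / a ^ (j + 1)) * a := by
      rw [← Finset.sum_range_reflect]
      apply Finset.sum_congr rfl
      intro j hj
      have hj' : j < n := Finset.mem_range.1 hj
      congr 3
      omega
    have hterm : ∀ j : ℕ, (s / a ^ (j + 1)) * a = s * (1/a) ^ j := by
      intro j
      rw [pow_succ]
      field_simp
      ring
      rw [← mul_pow, mul_inv_cancel₀ ha0.ne', one_pow]
    rw [hrefl]
    simp only [hterm]
    rw [← Finset.mul_sum]
    have hane : (1/a : ℝ) ≠ 1 := by
      intro hcon
      have : a = 1 := by field_simp at hcon; linarith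
      linarith
    rw [geom_sum_eq hane]
    have hran : (0:ℝ) < (1/a) ^ n := pow_pos (by positivity) n
    have hd : (1/a : ℝ) - 1 = -s := by rw [hs_def]; field_simp; ring
    have heq : s * ((((1/a:ℝ)) ^ n - 1) / ((1/a) - 1)) = 1 - (1/a) ^ n := by
      rw [hd, ← mul_div_assoc,
        show s * (((1/a:ℝ)) ^ n - 1) = -s * (1 - (1/a) ^ n) by ring,
        mul_div_cancel_left₀ _ (neg_ne_zero.2 hs_pos.ne')]
    rw [heq]
    linarith
  -- combine step 3 and the geometric bound
  have hT : (∑ j ∈ Finset.range n, h (j + 1) 0) - 1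
      ≤ ∑ j ∈ Finset.range n, h (j + 1) (s / a ^ (n - j)) := by
    have h1 : ∑ j ∈ Finset.range n, (h (j+1) 0 - (s / a ^ (n - j)) * a)
        ≤ ∑ j ∈ Finset.range n, h (j + 1) (s / a ^ (n - j)) :=
      Finset.sum_le_sum fun j hj => hstep3 j (Finset.mem_range.1 hj)
    rw [Finset.sum_sub_distrib] at h1
    linarith
  -- main chain
  have hkey := hrec n hn s hs_pos.le
  set T := ∑ j ∈ Finset.range n, h (j + 1) (s / a ^ (n - j)) with hTdef
  set E := ∑ j ∈ Finset.range n, h (j + 1) 0 with hEdef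
  have hchain : (s / a ^ n) / 2 * Real.exp (E - 1) ≤ 1 := by
    calc (s / a ^ n) / 2 * Real.exp (E - 1)
        ≤ (1 - g 1 (s / a ^ n)) * Real.exp T := by
          apply mul_le_mul hstep2 (Real.exp_le_exp.2 hT) (Real.exp_pos _).le
          linarith
      _ = 1 - g (n+1) s := hkey.symm
      _ ≤ 1 := by linarith
  have e1pos := Real.exp_pos (1:ℝ)
  have hEsub : Real.exp (E - 1) = Real.exp E / Real.exp 1 := Real.exp_sub E 1
  rw [hEsub] at hchain
  have h5 : s * Real.exp E ≤ 2 * a ^ n * Real.exp 1 := by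
    have heq2 : (s / a ^ n) / 2 * (Real.exp E / Real.exp 1)
        = s * Real.exp E / (2 * a ^ n * Real.exp 1) := by
      field_simp
    rw [heq2, div_le_one (by positivity)] at hchain
    exact hchain
  have hfin : 2 * Real.exp 1 * a / (a - 1) = 2 * Real.exp 1 / s := by
    rw [hs_def]
    field_simp
  rw [hfin]
  rw [one_div, inv_mul_eq_div, div_le_div_iff₀ hApos hs_pos]
  nlinarith [Real.exp_pos E]
end
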